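/- Let d ≥ 1, σ ∈ (0,1), μ ∈ [1/(4d), 1/(2d)), and 0 ≤ m ≤ σ·m₀(μ). Then the tilted transfer operator satisfies |Â_μ^{(m)}(k)| ≥ c·(m₀(μ) + |k|)² for all k ∈ [−π,π]^d, where Â_μ^{(m)}(k) = 1 − 2dμ·D̂^{(m)}(k), with a constant c > 0 depending only on d and σ. -/

import Mathlib

open Real

/-- Fourier transform of the exponentially tilted nearest-neighbour step distribution:
`D̂^{(m)}(k) = (i/d) sinh m sin k₁ + (1/d) cosh m cos k₁ + (1/d) ∑_{j≥2} cos k_j`. -/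
noncomputable def DhatTilt (d : ℕ) [NeZero d] (m : ℝ) (k : Fin d → ℝ) : ℂ :=
  Complex.I * ((Real.sinh m / d : ℝ) : ℂ) * ((Real.sin (k 0) : ℝ) : ℂ)
    + ((Real.cosh m / d * Real.cos (k 0) : ℝ) : ℂ)
    + (((1 / d : ℝ) * ∑ j ∈ Finset.univ.filter (fun j => j ≠ 0), Real.cos (k j) : ℝ) : ℂ)

set_option maxHeartbeats 1600000 in
/-- Massive infrared bound for the tilted transfer operator: for `σ ∈ (0,1)`,
`μ ∈ [1/(4d), 1/(2d))`, `0 ≤ m ≤ σ m₀(μ)` and `k ∈ [−π,π]^d`,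
`|Â_μ^{(m)}(k)| = |1 − 2dμ D̂^{(m)}(k)| ≥ c (m₀(μ) + |k|)²`, with `c > 0`
depending only on `d` and `σ`, where `cosh m₀(μ) = 1 + (1 − 2dμ)/(2μ)`. -/
theorem tilted_transfer_lower_bound (d : ℕ) [NeZero d] (σ : ℝ) (hσ : σ ∈ Set.Ioo (0:ℝ) 1) :
    ∃ c > (0:ℝ), ∀ μ : ℝ, 1 / (4 * d) ≤ μ → μ < 1 / (2 * d) →
      ∀ m₀ : ℝ, 0 ≤ m₀ → Real.cosh m₀ = 1 + (1 - 2 * d * μ) / (2 * μ) →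
      ∀ m : ℝ, 0 ≤ m → m ≤ σ * m₀ →
      ∀ k : Fin d → ℝ, (∀ j, |k j| ≤ π) →
        c * (m₀ + Real.sqrt (∑ j, (k j) ^ 2)) ^ 2
          ≤ ‖1 - 2 * d * μ * DhatTilt d m k‖ := by
  obtain ⟨hσ0, hσ1⟩ := hσ
  have hd1 : (1:ℝ) ≤ (d:ℝ) := Nat.one_le_cast.mpr (Nat.one_le_iff_ne_zero.mpr (NeZero.ne d))
  have hd0 : (0:ℝ) < d := by linarith
  have hπ : (0:ℝ) < π := Real.pi_pos
  set c₀ : ℝ := min ((1-σ)/2) (2/π^2) with hc₀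
  have hc₀pos : 0 < c₀ := lt_min (by linarith) (by positivity)
  refine ⟨c₀ / (4*d), by positivity, ?_⟩
  intro μ hμl hμh m₀ hm₀ hcosh m hm0 hmσ k hk
  have hμ0 : 0 < μ := lt_of_lt_of_le (by positivity) hμl
  set F := Finset.univ.filter (fun j : Fin d => j ≠ 0) with hF
  set T := ∑ j ∈ F, Real.cos (k j) with hT
  set S := ∑ j, (k j)^2 with hSdef
  have hSnn : 0 ≤ S := Finset.sum_nonneg fun j _ => sq_nonneg _
  have hS2nn : 0 ≤ ∑ j ∈ F, (k j)^2 := Finset.sum_nonneg fun j _ => sq_nonneg _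
  -- real part formula
  have hre : (1 - 2 * d * μ * DhatTilt d m k).re
      = 1 - 2 * d * μ * (Real.cosh m / d * Real.cos (k 0)) - 2 * d * μ * ((1/d) * T) := by
    simp [DhatTilt, Complex.sub_re, Complex.mul_re, Complex.mul_im, Complex.add_re,
      Complex.cos_ofReal_re, Complex.sin_ofReal_re, hT, hF]
    ring
  have hre' : (1 - 2 * d * μ * DhatTilt d m k).re
      = 1 - 2*μ*(Real.cosh m * Real.cos (k 0)) - 2*μ*T := by
    rw [hre]; field_simp
  -- identity for 1
  have h1 : (1:ℝ) = 2*μ*Real.cosh m₀ - 2*μ + 2*(d:ℝ)*μ := by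
    have h2μ : (2*μ) ≠ 0 := by positivity
    field_simp at hcosh
    linarith
  -- cosh gap
  have hgap : (1-σ)/2 * m₀^2 ≤ Real.cosh m₀ - Real.cosh m := by
    have ha := Real.cosh_add ((m₀+m)/2) ((m₀-m)/2)
    have hb := Real.cosh_sub ((m₀+m)/2) ((m₀-m)/2)
    rw [show (m₀+m)/2 + (m₀-m)/2 = m₀ by ring] at ha
    rw [show (m₀+m)/2 - (m₀-m)/2 = m by ring] at hb
    have hg1 : m₀/2 ≤ Real.sinh ((m₀+m)/2) :=
      le_trans (by linarith) (Real.self_le_sinh_iff.mpr (by linarith))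
    have hg2 : (1-σ)*m₀/2 ≤ Real.sinh ((m₀-m)/2) := by
      have hmm : (1-σ)*m₀/2 ≤ (m₀-m)/2 := by nlinarith
      exact le_trans hmm (Real.self_le_sinh_iff.mpr (by nlinarith))
    have hprod : m₀/2 * ((1-σ)*m₀/2) ≤ Real.sinh ((m₀+m)/2) * Real.sinh ((m₀-m)/2) :=
      mul_le_mul hg1 hg2 (by nlinarith) (le_trans (by linarith) hg1)
    linarith
  -- cos bounds
  have hcoshm : 1 ≤ Real.cosh m := Real.one_le_cosh m
  have hcos0 : Real.cos (k 0) ≤ 1 - 2/π^2 * (k 0)^2 := Real.cos_le_one_sub_mul_cos_sq (hk 0)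
  have step1 : Real.cosh m * Real.cos (k 0) ≤ Real.cosh m - 2/π^2 * (k 0)^2 := by
    have h3 := mul_le_mul_of_nonneg_left hcos0 (le_trans zero_le_one hcoshm)
    have h4 : 2/π^2 * (k 0)^2 ≤ Real.cosh m * (2/π^2 * (k 0)^2) :=
      le_mul_of_one_le_left (by positivity) hcoshm
    linarith [h3, h4]
  -- card of F
  have hcard : (F.card : ℝ) = (d:ℝ) - 1 := by
    have : F = Finset.univ.erase 0 := Finset.filter_ne' _ _
    rw [this, Finset.card_erase_of_mem (Finset.mem_univ 0)]
    simp
    rw [Nat.cast_sub (Nat.one_le_iff_ne_zero.mpr (NeZero.ne d))]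
    simp
  have hTle : T ≤ (F.card : ℝ) - 2/π^2 * ∑ j ∈ F, (k j)^2 := by
    calc T ≤ ∑ j ∈ F, (1 - 2/π^2 * (k j)^2) :=
          Finset.sum_le_sum fun j _ => Real.cos_le_one_sub_mul_cos_sq (hk j)
      _ = (F.card : ℝ) - 2/π^2 * ∑ j ∈ F, (k j)^2 := by
          rw [Finset.sum_sub_distrib, Finset.sum_const, ← Finset.mul_sum]
          simp [nsmul_eq_mul]
  -- split S
  have hS : S = (k 0)^2 + ∑ j ∈ F, (k j)^2 := by
    rw [hSdef, hF, Finset.filter_ne']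
    exact (Finset.add_sum_erase _ _ (Finset.mem_univ 0)).symm
  -- real part lower bound
  have hrebound : 2*μ*((1-σ)/2*m₀^2 + 2/π^2 * S) ≤ (1 - 2 * d * μ * DhatTilt d m k).re := by
    rw [hre', hS]
    have A := mul_le_mul_of_nonneg_left step1 (show (0:ℝ) ≤ 2*μ by positivity)
    have B := mul_le_mul_of_nonneg_left hTle (show (0:ℝ) ≤ 2*μ by positivity)
    have C := mul_le_mul_of_nonneg_left hgap (show (0:ℝ) ≤ 2*μ by positivity)
    rw [hcard] at B
    linarith [B, C, A, h1]
  -- final chain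
  have hsq : Real.sqrt S ^ 2 = S := Real.sq_sqrt hSnn
  have hfin : (m₀ + Real.sqrt S)^2 ≤ 2*(m₀^2 + S) := by
    nlinarith [sq_nonneg (m₀ - Real.sqrt S), hsq]
  have e1 : c₀/(4*d) * (m₀ + Real.sqrt S)^2 ≤ c₀/(4*d) * (2*(m₀^2+S)) :=
    mul_le_mul_of_nonneg_left hfin (by positivity)
  have e2 : c₀/(4*d)*(2*(m₀^2+S)) ≤ 2*μ*(c₀*(m₀^2+S)) := by
    have h5 := mul_le_mul_of_nonneg_right
      (mul_le_mul_of_nonneg_left hμl (show (0:ℝ) ≤ 2*c₀ by positivity))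
      (show (0:ℝ) ≤ m₀^2 + S by positivity)
    ring_nf at h5 ⊢
    linarith [h5]
  have e3 : 2*μ*(c₀*(m₀^2+S)) ≤ 2*μ*((1-σ)/2*m₀^2 + 2/π^2*S) := by
    have h6 : c₀*m₀^2 ≤ (1-σ)/2*m₀^2 := mul_le_mul_of_nonneg_right (min_le_left _ _) (sq_nonneg _)
    have h7 : c₀*S ≤ 2/π^2*S := mul_le_mul_of_nonneg_right (min_le_right _ _) hSnn
    linarith [mul_le_mul_of_nonneg_left (add_le_add h6 h7) (show (0:ℝ) ≤ 2*μ by positivity)]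
  calc c₀/(4*d) * (m₀ + Real.sqrt S)^2
      ≤ 2*μ*((1-σ)/2*m₀^2 + 2/π^2*S) := le_trans e1 (le_trans e2 e3)
    _ ≤ (1 - 2 * d * μ * DhatTilt d m k).re := hrebound
    _ ≤ ‖1 - 2 * d * μ * DhatTilt d m k‖ := Complex.re_le_norm _
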